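/- For any finite family a₁,…,aₙ of compact operators on an infinite-dimensional separable Hilbert space L, there exist compact operators c, d₁,…,dₙ such that aₖ = c·dₖ for all k and c is injective with dense range (in particular, c is not a divisor of zero in K(L)). -/

import Mathlib

open scoped InnerProductSpace

open Polynomial in
lemma isCompactOperator_cfc_aux {L : Type*} [NormedAddCommGroup L] [InnerProductSpace ℂ L]
    [CompleteSpace L] [Nontrivial L] {S : L →L[ℂ] L} (hS : IsCompactOperator S)
    (hsa : IsSelfAdjoint S) {f : ℝ → ℝ} (hf : Continuous f) (hf0 : f 0 = 0) :
    IsCompactOperator ⇑(cfc f S : L →L[ℂ] L) := by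
  have key : ∀ ε : ℝ, 0 < ε → ∃ A : L →L[ℂ] L, IsCompactOperator A ∧ ‖cfc f S - A‖ ≤ ε := by
    intro ε hε
    obtain ⟨p, hp⟩ := exists_polynomial_near_of_continuousOn (-‖S‖) ‖S‖ f
      hf.continuousOn (ε/3) (by linarith)
    have h0 : (0:ℝ) ∈ Set.Icc (-‖S‖) ‖S‖ := ⟨neg_nonpos.2 (norm_nonneg S), norm_nonneg S⟩
    obtain ⟨q, hq0, hqeval⟩ : ∃ q : ℝ[X], q.coeff 0 = 0 ∧ ∀ x, q.eval x = p.eval x - p.eval 0 :=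
      ⟨p - Polynomial.C (p.eval 0),
        by simp [Polynomial.coeff_sub, Polynomial.coeff_zero_eq_eval_zero], fun x => by simp⟩
    refine ⟨Polynomial.aeval S q, ?_, ?_⟩
    · have heq : Polynomial.aeval S q = (Polynomial.aeval S q.divX) * S := by
        conv_lhs => rw [← q.divX_mul_X_add]
        rw [hq0, map_zero, add_zero, map_mul, Polynomial.aeval_X]
      rw [heq]
      exact hS.continuous_comp (Polynomial.aeval S q.divX).continuous
    · have hspec : ∀ x ∈ spectrum ℝ S, x ∈ Set.Icc (-‖S‖) ‖S‖ := by
        intro x hx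
        have := spectrum.norm_le_norm_of_mem hx
        rw [Real.norm_eq_abs, abs_le] at this
        exact this
      have hcfc : cfc f S - Polynomial.aeval S q
          = cfc (fun x : ℝ => f x - q.eval x) S := by
        rw [cfc_sub f (fun x : ℝ => q.eval x) S, cfc_polynomial q S]
      rw [hcfc]
      refine norm_cfc_le hε.le ?_
      intro x hx
      have hx' := hspec x hx
      have h1 : |p.eval x - f x| < ε/3 := hp x hx'
      have h2 : |p.eval 0 - f 0| < ε/3 := hp 0 h0
      rw [hf0, sub_zero] at h2
      rw [Real.norm_eq_abs, hqeval]
      have : f x - (p.eval x - p.eval 0) = -(p.eval x - f x) + p.eval 0 := by ring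
      rw [this]
      calc |(-(p.eval x - f x)) + p.eval 0| ≤ |(-(p.eval x - f x))| + |p.eval 0| := abs_add_le _ _
        _ ≤ ε/3 + ε/3 := by rw [abs_neg]; exact add_le_add h1.le h2.le
        _ ≤ ε := by linarith
  have hclosed : IsClosed { A : L →L[ℂ] L | IsCompactOperator A } :=
    isClosed_setOf_isCompactOperator
  have hmem : (cfc f S : L →L[ℂ] L) ∈ closure { A : L →L[ℂ] L | IsCompactOperator A } := by
    rw [Metric.mem_closure_iff]
    intro ε hε
    obtain ⟨A, hA, hAle⟩ := key (ε/2) (by linarith)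
    exact ⟨A, hA, by rw [dist_eq_norm]; linarith⟩
  have := hclosed.closure_eq ▸ hmem
  exact this


set_option maxHeartbeats 2000000 in
lemma exists_injective_compactOp {L : Type*} [NormedAddCommGroup L] [InnerProductSpace ℂ L]
    [CompleteSpace L] [TopologicalSpace.SeparableSpace L] (hL : ¬ FiniteDimensional ℂ L) :
    ∃ B : L →L[ℂ] L, IsCompactOperator B ∧ Function.Injective B := by
  obtain ⟨w, b, hb⟩ := exists_hilbertBasis ℂ L
  have hb' : ⇑b = (Subtype.val : w → L) := hb
  have hON : Orthonormal ℂ (Subtype.val : w → L) := hb' ▸ b.orthonormal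
  have hnorm : ∀ i : w, ‖(i : L)‖ = 1 := hON.1
  have hinner : ∀ i j : w, i ≠ j → ⟪(i : L), (j : L)⟫_ℂ = 0 := fun i j hij => hON.2 hij
  have hdense : Dense ((Submodule.span ℂ w : Submodule ℂ L) : Set L) := by
    refine Submodule.dense_iff_topologicalClosure_eq_top.2 ?_
    have := b.dense_span
    rwa [hb', Subtype.range_coe] at this
  -- distance between distinct elements of w
  have hdist : ∀ x ∈ w, ∀ y ∈ w, x ≠ y → (1 : ℝ) ≤ dist x y := by
    intro x hx y hy hxy
    have hz : ⟪x, y⟫_ℂ = 0 := hinner ⟨x, hx⟩ ⟨y, hy⟩ (by simpa [Subtype.ext_iff] using hxy)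
    have h2 : ‖x - y‖ ^ 2 = 2 := by
      have h := norm_sub_sq (𝕜 := ℂ) x y
      rw [hz] at h
      simp only [map_zero, mul_zero, sub_zero] at h
      rw [h, hnorm ⟨x, hx⟩, hnorm ⟨y, hy⟩]
      norm_num
    rw [dist_eq_norm]
    nlinarith [norm_nonneg (x - y)]
  -- countability of w
  have hpd : w.PairwiseDisjoint (fun x : L => Metric.ball x (1/2)) := by
    intro x hx y hy hxy
    exact Metric.ball_disjoint_ball (by linarith [hdist x hx y hy hxy])
  have hcount : w.Countable :=
    hpd.countable_of_isOpen (fun i _ => Metric.isOpen_ball)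
      (fun i _ => Metric.nonempty_ball.2 (by norm_num))
  -- w is infinite
  have hinf : w.Infinite := by
    by_contra hfin
    rw [Set.not_infinite] at hfin
    apply hL
    haveI : FiniteDimensional ℂ ↥(Submodule.span ℂ w) := FiniteDimensional.span_of_finite ℂ hfin
    have hclosed : IsClosed ((Submodule.span ℂ w : Submodule ℂ L) : Set L) :=
      Submodule.closed_of_finiteDimensional _
    have htop : Submodule.span ℂ w = ⊤ := by
      refine Submodule.eq_top_iff'.2 fun x => ?_
      have : x ∈ closure ((Submodule.span ℂ w : Submodule ℂ L) : Set L) := hdense x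
      rwa [hclosed.closure_eq] at this
    haveI hfd : FiniteDimensional ℂ ↥(⊤ : Submodule ℂ L) := by
      rw [← htop]; infer_instance
    exact Module.Finite.equiv (Submodule.topEquiv (R := ℂ) (M := L))
  haveI : Countable ↥w := hcount.to_subtype
  haveI : Infinite ↥w := hinf.to_subtype
  obtain ⟨dw⟩ := nonempty_denumerable ↥w
  obtain ⟨e⟩ : Nonempty (↥w ≃ ℕ) := ⟨@Denumerable.eqv _ dw⟩
  -- the diagonal operator data, packaged opaquely
  obtain ⟨μ, R, hμne, hμnorm, hRnorm, hRapp, hRcpt⟩ :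
      ∃ (μ : ↥w → ℂ) (R : ↥w → (L →L[ℂ] L)),
        (∀ i, μ i ≠ 0) ∧ (∀ i, ‖μ i‖ = (1/2 : ℝ) ^ (e i)) ∧ (∀ i, ‖R i‖ = 1) ∧
        (∀ i x, R i x = ⟪(i : L), x⟫_ℂ • (i : L)) ∧ (∀ i, IsCompactOperator ⇑(R i)) := by
    refine ⟨fun i => (1/2 : ℂ) ^ (e i), fun i => (innerSL ℂ (i : L)).smulRight (i : L),
      fun i => pow_ne_zero _ (by norm_num), fun i => by simp [norm_pow],
      fun i => ?_, fun i x => by simp, fun i => ?_⟩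
    · rw [ContinuousLinearMap.norm_smulRight_apply, innerSL_apply_norm, hnorm i]
      norm_num
    · have hg : IsCompactOperator ⇑(ContinuousLinearMap.toSpanSingleton ℂ (i : L)) :=
        ⟨ContinuousLinearMap.toSpanSingleton ℂ (i : L) '' Metric.closedBall 0 1,
          (isCompact_closedBall (0:ℂ) 1).image
            (ContinuousLinearMap.toSpanSingleton ℂ (i : L)).continuous,
          Filter.mem_of_superset (Metric.closedBall_mem_nhds 0 one_pos)
            (Set.subset_preimage_image _ _)⟩
      have heq : ⇑((innerSL ℂ (i : L)).smulRight (i : L))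
          = ⇑(ContinuousLinearMap.toSpanSingleton ℂ (i : L)) ∘ ⇑(innerSL ℂ (i : L)) := by
        funext x
        simp [ContinuousLinearMap.toSpanSingleton_apply]
      rw [heq]
      exact hg.comp_clm _
  have hsummable : Summable (fun i : ↥w => μ i • R i) := by
    refine Summable.of_norm_bounded (g := fun i => (1/2 : ℝ) ^ (e i))
      ((Equiv.summable_iff e).2 summable_geometric_two) ?_
    intro i
    rw [norm_smul, hRnorm, hμnorm, mul_one]
  obtain ⟨B, hB⟩ := hsummable
  refine ⟨B, ?_, ?_⟩
  · -- compactness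
    refine isCompactOperator_of_tendsto hB (Filter.Eventually.of_forall fun s => ?_)
    refine Finset.sum_induction _ (fun A : L →L[ℂ] L => IsCompactOperator ⇑A) ?_ ?_ ?_
    · intro A A' pa pb
      rw [ContinuousLinearMap.coe_add']
      exact pa.add pb
    · show IsCompactOperator ⇑(0 : L →L[ℂ] L)
      rw [ContinuousLinearMap.coe_zero']
      exact isCompactOperator_zero
    · intro i _
      have := (hRcpt i).smul (μ i)
      rwa [← ContinuousLinearMap.coe_smul'] at this
  · -- injectivity
    have key : ∀ x, B x = 0 → x = 0 := by
      intro x hx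
      have h1 : HasSum (fun i : ↥w => (μ i • R i) x) (B x) :=
        (ContinuousLinearMap.apply ℂ L x).hasSum hB
      have hzero : ∀ j : ↥w, ⟪(j : L), x⟫_ℂ = 0 := by
        intro j
        have h2 : HasSum (fun i : ↥w => ⟪(j : L), (μ i • R i) x⟫_ℂ) ⟪(j : L), B x⟫_ℂ :=
          (innerSL ℂ (j : L)).hasSum h1
        have hterm : ∀ i : ↥w, i ≠ j → ⟪(j : L), (μ i • R i) x⟫_ℂ = 0 := by
          intro i hij
          rw [ContinuousLinearMap.smul_apply, hRapp i x]
          simp [inner_smul_right, hinner j i hij.symm]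
        have h3 := hasSum_single (f := fun i : ↥w => ⟪(j : L), (μ i • R i) x⟫_ℂ) j hterm
        have h4 : ⟪(j : L), (μ j • R j) x⟫_ℂ = ⟪(j : L), B x⟫_ℂ := h3.unique h2
        rw [hx, inner_zero_right] at h4
        have hjj : ⟪(j : L), (j : L)⟫_ℂ = 1 := by
          rw [inner_self_eq_norm_sq_to_K, hnorm j]
          norm_num
        rw [ContinuousLinearMap.smul_apply, hRapp j x, inner_smul_right, inner_smul_right,
          hjj, mul_one] at h4
        rcases mul_eq_zero.mp h4 with h | h
        · exact absurd h (hμne j)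
        · exact h
      -- x is orthogonal to the dense span of w
      refine hdense.eq_zero_of_inner_left ℂ fun v hv => ?_
      have hsub : Submodule.span ℂ w ≤ LinearMap.ker ((innerSL ℂ x : L →L[ℂ] ℂ) : L →ₗ[ℂ] ℂ) := by
        rw [Submodule.span_le]
        intro u hu
        have h5 : ⟪((⟨u, hu⟩ : w) : L), x⟫_ℂ = 0 := hzero ⟨u, hu⟩
        have h6 : ⟪x, u⟫_ℂ = 0 := by
          rw [← inner_conj_symm x u]
          change (starRingEnd ℂ) ⟪((⟨u, hu⟩ : w) : L), x⟫_ℂ = 0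
          rw [h5, map_zero]
        simpa [LinearMap.mem_ker] using h6
      have := hsub hv
      simpa [LinearMap.mem_ker] using this
    intro x y hxy
    have := key (x - y) (by rw [map_sub, hxy, sub_self])
    exact sub_eq_zero.mp this


lemma denseRange_of_selfAdjoint_injective {L : Type*} [NormedAddCommGroup L]
    [InnerProductSpace ℂ L] [CompleteSpace L] {A : L →L[ℂ] L} (hA : IsSelfAdjoint A)
    (hinj : Function.Injective A) : DenseRange ⇑A := by
  have hadj : ContinuousLinearMap.adjoint A = A := by
    rw [← ContinuousLinearMap.star_eq_adjoint]; exact hA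
  have hd : Dense ((LinearMap.range (A : L →ₗ[ℂ] L) : Submodule ℂ L) : Set L) := by
    rw [Submodule.dense_iff_topologicalClosure_eq_top, Submodule.topologicalClosure_eq_top_iff,
      Submodule.eq_bot_iff]
    intro x hx
    have h2 : ⟪A (A x), x⟫_ℂ = 0 :=
      (Submodule.mem_orthogonal _ x).1 hx _ (LinearMap.mem_range_self (A : L →ₗ[ℂ] L) (A x))
    have h3 : ⟪A x, A x⟫_ℂ = 0 := by
      have h5 := ContinuousLinearMap.adjoint_inner_right A (A x) x
      rw [hadj] at h5
      exact h5.trans h2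
    have hAx : A x = 0 := inner_self_eq_zero.1 h3
    exact hinj (show A x = A 0 by rw [hAx, map_zero])
  have hset : ((LinearMap.range (A : L →ₗ[ℂ] L) : Submodule ℂ L) : Set L) = Set.range ⇑A :=
    LinearMap.coe_range (A : L →ₗ[ℂ] L)
  rw [DenseRange, ← hset]
  exact hd

lemma douglas_factor {L : Type*} [NormedAddCommGroup L] [InnerProductSpace ℂ L]
    [CompleteSpace L] (T A : L →L[ℂ] L) (hdense : DenseRange ⇑T)
    (hbound : ∀ x, ‖A x‖ ≤ ‖T x‖) : ∃ u : L →L[ℂ] L, u.comp T = A := by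
  set T' := (T : L →ₗ[ℂ] L) with hT'def
  set A' := (A : L →ₗ[ℂ] L) with hA'def
  have hker : LinearMap.ker T' ≤ LinearMap.ker A' := by
    intro x hx
    rw [LinearMap.mem_ker] at hx ⊢
    have h := hbound x
    change T x = 0 at hx
    change A x = 0
    rw [hx, norm_zero] at h
    exact norm_le_zero_iff.1 h
  set p := LinearMap.range T' with hpdef
  let q := Submodule.liftQ (LinearMap.ker T') A' hker
  let iso := LinearMap.quotKerEquivRange T'
  let g : p →ₗ[ℂ] L := q.comp (iso.symm.toLinearMap)
  have hmem : ∀ x : L, T x ∈ p := fun x => LinearMap.mem_range_self T' x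
  have hg : ∀ x : L, g ⟨T x, hmem x⟩ = A x := by
    intro x
    have h2 : iso.symm ⟨T x, hmem x⟩ = Submodule.Quotient.mk x := by
      rw [LinearEquiv.symm_apply_eq]
      exact Subtype.ext (T'.quotKerEquivRange_apply_mk x).symm
    show q (iso.symm ⟨T x, hmem x⟩) = A x
    rw [h2]
    exact Submodule.liftQ_apply _ A' x
  have hgb : ∀ y : p, ‖g y‖ ≤ 1 * ‖y‖ := by
    rintro ⟨y, hy⟩
    obtain ⟨x, rfl⟩ := hy
    show ‖g ⟨T x, hmem x⟩‖ ≤ 1 * ‖(⟨T x, hmem x⟩ : p)‖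
    rw [hg x, one_mul]
    exact hbound x
  let G := g.mkContinuous 1 hgb
  have hdr : DenseRange ⇑(p.subtypeL) := by
    have h1 : Set.range ⇑(p.subtypeL) = (p : Set L) := Subtype.range_coe
    rw [DenseRange, h1]
    have h2 : (p : Set L) = Set.range ⇑T := LinearMap.coe_range T'
    rw [h2]
    exact hdense
  have hui : IsUniformInducing ⇑(p.subtypeL) := isometry_subtype_coe.isUniformInducing
  refine ⟨G.extend p.subtypeL, ContinuousLinearMap.ext fun x => ?_⟩
  show G.extend p.subtypeL (T x) = A x
  have h3 := ContinuousLinearMap.extend_eq G hdr hui ⟨T x, hmem x⟩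
  have h4 : p.subtypeL ⟨T x, hmem x⟩ = T x := rfl
  rw [h4] at h3
  rw [h3]
  show g ⟨T x, hmem x⟩ = A x
  exact hg x



open ContinuousLinearMap in
/-- For any finite family `a₁, …, aₙ` of compact operators on an infinite-dimensional
separable Hilbert space `L` there are compact operators `c, d₁, …, dₙ` with
`aₖ = c dₖ` for all `k` and `c` injective with dense range (so `c` is not a divisor
of zero in `K(L)`). -/
theorem exists_common_left_factor
    {L : Type*} [NormedAddCommGroup L] [InnerProductSpace ℂ L] [CompleteSpace L]
    [TopologicalSpace.SeparableSpace L] (hL : ¬ FiniteDimensional ℂ L)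
    {n : ℕ} (a : Fin n → (L →L[ℂ] L)) (ha : ∀ k, IsCompactOperator (a k)) :
    ∃ (c : L →L[ℂ] L) (d : Fin n → (L →L[ℂ] L)),
      IsCompactOperator c ∧ (∀ k, IsCompactOperator (d k)) ∧
      Function.Injective c ∧ DenseRange c ∧
      ∀ k, a k = c ∘L d k := by
  haveI : Nontrivial L := by
    by_contra h
    rw [not_nontrivial_iff_subsingleton] at h
    exact hL inferInstance
  obtain ⟨B, hBcpt, hBinj⟩ := exists_injective_compactOp hL
  -- the positive compact injective operator S
  set S : L →L[ℂ] L := star B * B + ∑ k, a k * star (a k) with hSdef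
  have hsum_nonneg : (0 : L →L[ℂ] L) ≤ ∑ k, a k * star (a k) :=
    Finset.sum_nonneg fun k _ => mul_star_self_nonneg (a k)
  have hSpos : (0 : L →L[ℂ] L) ≤ S := add_nonneg (star_mul_self_nonneg B) hsum_nonneg
  have hSsa : IsSelfAdjoint S := ((nonneg_iff_isPositive S).1 hSpos).isSelfAdjoint
  have hScpt : IsCompactOperator ⇑S := by
    have h1 : IsCompactOperator ⇑(star B * B) := by
      have := hBcpt.clm_comp (star B)
      rwa [show ⇑(star B) ∘ ⇑B = ⇑(star B * B) from rfl] at this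
    have h2 : IsCompactOperator ⇑(∑ k, a k * star (a k)) := by
      refine Finset.sum_induction _ (fun A : L →L[ℂ] L => IsCompactOperator ⇑A) ?_ ?_ ?_
      · intro A A' pa pb
        rw [ContinuousLinearMap.coe_add']
        exact pa.add pb
      · show IsCompactOperator ⇑(0 : L →L[ℂ] L)
        rw [ContinuousLinearMap.coe_zero']
        exact isCompactOperator_zero
      · intro k _
        have := (ha k).comp_clm (star (a k))
        rwa [show ⇑(a k) ∘ ⇑(star (a k)) = ⇑(a k * star (a k)) from rfl] at this
    have := h1.add h2
    rwa [show ⇑(star B * B) + ⇑(∑ k, a k * star (a k)) = ⇑S from by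
      rw [hSdef, ContinuousLinearMap.coe_add']] at this
  -- quadratic form computations
  have hquad : ∀ (A C : L →L[ℂ] L) (x : L), ⟪(star A * C) x, x⟫_ℂ = ⟪C x, A x⟫_ℂ := by
    intro A C x
    rw [ContinuousLinearMap.mul_apply, ContinuousLinearMap.star_eq_adjoint]
    simp [ContinuousLinearMap.adjoint_inner_left]
  -- S is injective
  have hSinj : ∀ x, S x = 0 → x = 0 := by
    intro x hx
    have h1 : star B * B ≤ S := le_add_of_nonneg_right hsum_nonneg
    have h2 := ((nonneg_iff_isPositive _).1 (sub_nonneg.2 h1)).re_inner_nonneg_left x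
    have h3 : RCLike.re ⟪(S - (star B * B)) x, x⟫_ℂ
        = RCLike.re ⟪S x, x⟫_ℂ - RCLike.re ⟪(star B * B) x, x⟫_ℂ := by
      rw [ContinuousLinearMap.sub_apply, inner_sub_left, map_sub]
    have h4 : RCLike.re ⟪(star B * B) x, x⟫_ℂ = ‖B x‖ ^ 2 := by
      rw [hquad B B x, inner_self_eq_norm_sq]
    rw [h3, h4, hx, inner_zero_left, map_zero] at h2
    have h5 : ‖B x‖ ^ 2 ≤ 0 := by linarith
    have h6 : B x = 0 := by
      have := norm_nonneg (B x)
      have h7 : ‖B x‖ = 0 := by nlinarith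
      exact norm_eq_zero.1 h7
    exact hBinj (show B x = B 0 by rw [h6, map_zero])
  -- T = sqrt S
  set T : L →L[ℂ] L := cfc Real.sqrt S with hTdef
  have hTsa : IsSelfAdjoint T := cfc_predicate Real.sqrt S
  have hTpos : (0 : L →L[ℂ] L) ≤ T := cfc_nonneg fun x _ => Real.sqrt_nonneg x
  have hTT : T * T = S := by
    rw [hTdef, ← cfc_mul Real.sqrt Real.sqrt S
      Real.continuous_sqrt.continuousOn Real.continuous_sqrt.continuousOn,
      cfc_congr (g := fun x : ℝ => x)
        (fun x hx => Real.mul_self_sqrt (spectrum_nonneg_of_nonneg hSpos hx))]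
    exact cfc_id' ℝ S hSsa
  have hTcpt : IsCompactOperator ⇑T :=
    isCompactOperator_cfc_aux hScpt hSsa Real.continuous_sqrt Real.sqrt_zero
  have hTinj : ∀ x, T x = 0 → x = 0 := by
    intro x hx
    refine hSinj x ?_
    rw [← hTT, ContinuousLinearMap.mul_apply, hx, map_zero]
  -- c = sqrt T
  set c : L →L[ℂ] L := cfc Real.sqrt T with hcdef
  have hcsa : IsSelfAdjoint c := cfc_predicate Real.sqrt T
  have hcc : c * c = T := by
    rw [hcdef, ← cfc_mul Real.sqrt Real.sqrt T
      Real.continuous_sqrt.continuousOn Real.continuous_sqrt.continuousOn,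
      cfc_congr (g := fun x : ℝ => x)
        (fun x hx => Real.mul_self_sqrt (spectrum_nonneg_of_nonneg hTpos hx))]
    exact cfc_id' ℝ T hTsa
  have hccpt : IsCompactOperator ⇑c :=
    isCompactOperator_cfc_aux hTcpt hTsa Real.continuous_sqrt Real.sqrt_zero
  have hcinj : ∀ x, c x = 0 → x = 0 := by
    intro x hx
    refine hTinj x ?_
    rw [← hcc, ContinuousLinearMap.mul_apply, hx, map_zero]
  have toInj : ∀ (A : L →L[ℂ] L), (∀ x, A x = 0 → x = 0) → Function.Injective ⇑A :=
    fun A h x y hxy => sub_eq_zero.mp (h _ (by rw [map_sub, hxy, sub_self]))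
  have hcInj : Function.Injective ⇑c := toInj c hcinj
  have hcdense : DenseRange ⇑c := denseRange_of_selfAdjoint_injective hcsa hcInj
  have hTdense : DenseRange ⇑T := denseRange_of_selfAdjoint_injective hTsa (toInj T hTinj)
  have hTadj : ContinuousLinearMap.adjoint T = T := by
    rw [← ContinuousLinearMap.star_eq_adjoint]; exact hTsa
  -- Douglas bound
  have hbound : ∀ k (x : L), ‖(star (a k)) x‖ ≤ ‖T x‖ := by
    intro k x
    have hm : a k * star (a k) ≤ S := by
      have h6 : a k * star (a k) ≤ ∑ j, a j * star (a j) :=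
        Finset.single_le_sum (f := fun j => a j * star (a j))
          (fun j _ => mul_star_self_nonneg (a j)) (Finset.mem_univ k)
      calc a k * star (a k) ≤ ∑ j, a j * star (a j) := h6
        _ ≤ S := le_add_of_nonneg_left (star_mul_self_nonneg B)
    have h2 := ((nonneg_iff_isPositive _).1 (sub_nonneg.2 hm)).re_inner_nonneg_left x
    have h3 : RCLike.re ⟪(S - a k * star (a k)) x, x⟫_ℂ
        = RCLike.re ⟪S x, x⟫_ℂ - RCLike.re ⟪(a k * star (a k)) x, x⟫_ℂ := by
      rw [ContinuousLinearMap.sub_apply, inner_sub_left, map_sub]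
    have h4 : RCLike.re ⟪(a k * star (a k)) x, x⟫_ℂ = ‖(star (a k)) x‖ ^ 2 := by
      have := hquad (star (a k)) (star (a k)) x
      rw [star_star] at this
      rw [this, inner_self_eq_norm_sq]
    have h5 : RCLike.re ⟪S x, x⟫_ℂ = ‖T x‖ ^ 2 := by
      have h7 : star T * T = S := by rw [hTsa.star_eq]; exact hTT
      rw [← h7, hquad T T x, inner_self_eq_norm_sq]
    rw [h3, h4, h5] at h2
    nlinarith [norm_nonneg ((star (a k)) x), norm_nonneg (T x)]
  -- construct the d k
  have hd : ∀ k, ∃ dk : L →L[ℂ] L, IsCompactOperator ⇑dk ∧ a k = c ∘L dk := by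
    intro k
    obtain ⟨u, hu⟩ := douglas_factor T (star (a k)) hTdense (hbound k)
    have hak : T.comp (ContinuousLinearMap.adjoint u) = a k := by
      have h := congrArg ContinuousLinearMap.adjoint hu
      have h8 : ContinuousLinearMap.adjoint (star (a k)) = a k := by
        rw [← ContinuousLinearMap.star_eq_adjoint, star_star]
      rw [ContinuousLinearMap.adjoint_comp, hTadj, h8] at h
      exact h
    refine ⟨c ∘L ContinuousLinearMap.adjoint u, ?_, ?_⟩
    · have := hccpt.comp_clm (ContinuousLinearMap.adjoint u)
      rwa [← ContinuousLinearMap.coe_comp'] at this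
    · rw [← hak, ← hcc, ContinuousLinearMap.mul_def, ContinuousLinearMap.comp_assoc]
  choose d hd1 hd2 using hd
  exact ⟨c, d, hccpt, hd1, hcInj, hcdense, hd2⟩
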